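/- Suppose the quadruple (λ,x,μ,y) ∈ ℂ × ℂⁿ × ℂ × ℂᵐ is such that cᵀy = 1 and the Jacobian J(λ,μ,y) is invertible. Then (λ,x,μ,y) solves the two-parameter eigenvalue problem, i.e. A(λ,μ)x = 0 and B(λ,μ)y = 0, if and only if there exist functions g : ℂ → ℂ and Y : ℂ → ℂᵐ, analytic at λ, with g(λ) = μ and Y(λ) = y, such that B(s,g(s))Y(s) = 0 and cᵀY(s) = 1 for all s in some neighborhood of λ, and (A₁ + λA₂ + g(λ)A₃)x = 0. -/

import Mathlib

open Matrix

/-- **Equivalence between the two-parameter eigenvalue problem and the nonlinearized NEP.**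
Suppose `(λ,x,μ,y)` is such that `cᵀy = 1` and the Jacobian `J(λ,μ,y)` is invertible.  Then
`(λ,x,μ,y)` solves the two-parameter eigenvalue problem `A(λ,μ)x = 0`, `B(λ,μ)y = 0` if and only
if there exist functions `g : ℂ → ℂ` and `Y : ℂ → ℂᵐ`, analytic at `λ`, with `g(λ) = μ`,
`Y(λ) = y`, satisfying `B(s,g(s))Y(s) = 0` and `cᵀY(s) = 1` near `λ`, and
`(A₁ + λA₂ + g(λ)A₃)x = 0`. -/
theorem nonlinearization_equivalence
    (n m : ℕ) (A₁ A₂ A₃ : Matrix (Fin n) (Fin n) ℂ)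
    (B₁ B₂ B₃ : Matrix (Fin m) (Fin m) ℂ) (c : Fin m → ℂ)
    (lam μ : ℂ) (x : Fin n → ℂ) (y : Fin m → ℂ)
    (hc : c ⬝ᵥ y = 1)
    (hJ : IsUnit (Matrix.fromBlocks (B₁ + lam • B₂ + μ • B₃)
        (Matrix.replicateCol (Fin 1) (B₃ *ᵥ y)) (Matrix.replicateRow (Fin 1) c) 0)) :
    ((A₁ + lam • A₂ + μ • A₃) *ᵥ x = 0 ∧ (B₁ + lam • B₂ + μ • B₃) *ᵥ y = 0)
    ↔
    (∃ (g : ℂ → ℂ) (Y : ℂ → (Fin m → ℂ)),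
      AnalyticAt ℂ g lam ∧ AnalyticAt ℂ Y lam ∧
      g lam = μ ∧ Y lam = y ∧
      (∀ᶠ s in nhds lam,
        (B₁ + s • B₂ + g s • B₃) *ᵥ (Y s) = 0 ∧ c ⬝ᵥ (Y s) = 1) ∧
      (A₁ + lam • A₂ + g lam • A₃) *ᵥ x = 0) := by
  constructor
  · rintro ⟨hA, hB⟩
    classical
    -- the nonlinear map
    set Fn : (ℂ × ℂ × (Fin m → ℂ)) → ℂ × ℂ × (Fin m → ℂ) :=
      fun p => (p.1, c ⬝ᵥ p.2.2, (B₁ + p.1 • B₂ + p.2.1 • B₃) *ᵥ p.2.2) with hFndef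
    set a₀ : ℂ × ℂ × (Fin m → ℂ) := (lam, μ, y) with ha₀
    -- the derivative as a linear map
    set Dlin : (ℂ × ℂ × (Fin m → ℂ)) →ₗ[ℂ] (ℂ × ℂ × (Fin m → ℂ)) :=
      { toFun := fun p => (p.1, c ⬝ᵥ p.2.2,
          (B₁ + lam • B₂ + μ • B₃) *ᵥ p.2.2 + p.1 • (B₂ *ᵥ y) + p.2.1 • (B₃ *ᵥ y))
        map_add' := by
          intro p q
          refine Prod.ext rfl (Prod.ext ?_ ?_)
          · simp [dotProduct_add]
          · simp only [Prod.snd_add, Prod.fst_add, Matrix.mulVec_add, add_smul]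
            abel
        map_smul' := by
          intro r p
          refine Prod.ext rfl (Prod.ext ?_ ?_)
          · simp [dotProduct_smul]
          · simp only [Prod.smul_snd, Prod.smul_fst, Matrix.mulVec_smul, smul_smul,
              smul_add, smul_eq_mul, RingHom.id_apply] } with hDlindef
    -- injectivity of the derivative
    have hinj : Function.Injective Dlin := by
      rw [← LinearMap.ker_eq_bot, LinearMap.ker_eq_bot']
      intro p hp
      have h1 : p.1 = 0 := congrArg Prod.fst hp
      have h2 : c ⬝ᵥ p.2.2 = 0 := congrArg (fun q : ℂ × ℂ × (Fin m → ℂ) => q.2.1) hp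
      have h3 : (B₁ + lam • B₂ + μ • B₃) *ᵥ p.2.2 + p.1 • (B₂ *ᵥ y) + p.2.1 • (B₃ *ᵥ y) = 0 :=
        congrArg (fun q : ℂ × ℂ × (Fin m → ℂ) => q.2.2) hp
      rw [h1, zero_smul, add_zero] at h3
      have hw : (Matrix.fromBlocks (B₁ + lam • B₂ + μ • B₃)
          (Matrix.replicateCol (Fin 1) (B₃ *ᵥ y)) (Matrix.replicateRow (Fin 1) c) 0) *ᵥ
          (Sum.elim p.2.2 (fun _ => p.2.1)) = 0 := by
        rw [Matrix.fromBlocks_mulVec]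
        funext i
        cases i with
        | inl i =>
          have := congrFun h3 i
          simpa [Matrix.mulVec, dotProduct, Matrix.replicateCol, mul_comm] using this
        | inr i =>
          simpa [Matrix.mulVec, dotProduct, Matrix.replicateRow] using h2
      have h0 : Sum.elim p.2.2 (fun _ : Fin 1 => p.2.1) = (0 : Fin m ⊕ Fin 1 → ℂ) :=
        (Matrix.mulVec_injective_iff_isUnit.mpr hJ) (by rw [hw, Matrix.mulVec_zero])
      obtain ⟨p1, p2, p3⟩ := p
      simp only at h1 h0 ⊢
      have hp3 : p3 = 0 := funext fun i => congrFun h0 (Sum.inl i)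
      have hp2 : p2 = 0 := congrFun h0 (Sum.inr 0)
      simp [h1, hp2, hp3, Prod.ext_iff]
    have hbij : Function.Bijective Dlin :=
      ⟨hinj, LinearMap.injective_iff_surjective.mp hinj⟩
    set Dequiv : (ℂ × ℂ × (Fin m → ℂ)) ≃L[ℂ] (ℂ × ℂ × (Fin m → ℂ)) :=
      (LinearEquiv.ofBijective Dlin hbij).toContinuousLinearEquiv with hDeq
    -- continuous linear map pieces
    set P1 : (ℂ × ℂ × (Fin m → ℂ)) →L[ℂ] ℂ :=
      ContinuousLinearMap.fst ℂ ℂ (ℂ × (Fin m → ℂ)) with hP1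
    set P2 : (ℂ × ℂ × (Fin m → ℂ)) →L[ℂ] ℂ :=
      (ContinuousLinearMap.fst ℂ ℂ (Fin m → ℂ)).comp
        (ContinuousLinearMap.snd ℂ ℂ (ℂ × (Fin m → ℂ))) with hP2
    set P3 : (ℂ × ℂ × (Fin m → ℂ)) →L[ℂ] (Fin m → ℂ) :=
      (ContinuousLinearMap.snd ℂ ℂ (Fin m → ℂ)).comp
        (ContinuousLinearMap.snd ℂ ℂ (ℂ × (Fin m → ℂ))) with hP3
    set mv : Matrix (Fin m) (Fin m) ℂ → (Fin m → ℂ) →L[ℂ] (Fin m → ℂ) :=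
      fun M => LinearMap.toContinuousLinearMap (Matrix.mulVecLin M) with hmv
    set dotc : (Fin m → ℂ) →L[ℂ] ℂ :=
      LinearMap.toContinuousLinearMap
        { toFun := fun v => c ⬝ᵥ v
          map_add' := fun a b => by simp [dotProduct_add]
          map_smul' := fun r a => by simp [dotProduct_smul] } with hdotc
    -- strict derivative via rules
    have h3 : HasStrictFDerivAt
        (fun p : ℂ × ℂ × (Fin m → ℂ) => (B₁ + p.1 • B₂ + p.2.1 • B₃) *ᵥ p.2.2)
        (((mv B₁).comp P3 + (P1 a₀ • ((mv B₂).comp P3) + P1.smulRight (((mv B₂).comp P3) a₀))) +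
          (P2 a₀ • ((mv B₃).comp P3) + P2.smulRight (((mv B₃).comp P3) a₀))) a₀ := by
      have h := ((((mv B₁).comp P3).hasStrictFDerivAt (x := a₀)).add
          ((P1.hasStrictFDerivAt (x := a₀)).smul
            (((mv B₂).comp P3).hasStrictFDerivAt (x := a₀)))).add
        ((P2.hasStrictFDerivAt (x := a₀)).smul
          (((mv B₃).comp P3).hasStrictFDerivAt (x := a₀)))
      apply h.congr_of_eventuallyEq
      filter_upwards with p
      simp [hmv, hP1, hP2, hP3, Matrix.add_mulVec, Matrix.smul_mulVec]
    have hbig : HasStrictFDerivAt Fn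
        (P1.prod ((dotc.comp P3).prod
          (((mv B₁).comp P3 + (P1 a₀ • ((mv B₂).comp P3) + P1.smulRight (((mv B₂).comp P3) a₀))) +
            (P2 a₀ • ((mv B₃).comp P3) + P2.smulRight (((mv B₃).comp P3) a₀))))) a₀ :=
      HasStrictFDerivAt.prodMk P1.hasStrictFDerivAt (HasStrictFDerivAt.prodMk (dotc.comp P3).hasStrictFDerivAt h3)
    have hDcoe : (Dequiv : (ℂ × ℂ × (Fin m → ℂ)) →L[ℂ] (ℂ × ℂ × (Fin m → ℂ))) =
        P1.prod ((dotc.comp P3).prod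
          (((mv B₁).comp P3 + (P1 a₀ • ((mv B₂).comp P3) + P1.smulRight (((mv B₂).comp P3) a₀))) +
            (P2 a₀ • ((mv B₃).comp P3) + P2.smulRight (((mv B₃).comp P3) a₀)))) := by
      apply ContinuousLinearMap.ext
      intro p
      show Dlin p = _
      simp only [hDlindef, hP1, hP2, hP3, hmv, hdotc, hFndef, ha₀, LinearMap.coe_mk,
        AddHom.coe_mk, ContinuousLinearMap.prod_apply, ContinuousLinearMap.add_apply,
        ContinuousLinearMap.coe_comp', Function.comp_apply, ContinuousLinearMap.coe_fst',
        ContinuousLinearMap.coe_snd', ContinuousLinearMap.smul_apply,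
        ContinuousLinearMap.smulRight_apply, LinearMap.coe_toContinuousLinearMap,
        Matrix.mulVecLin_apply]
      refine Prod.ext rfl (Prod.ext rfl ?_)
      simp only [Matrix.add_mulVec, Matrix.smul_mulVec,
        LinearMap.coe_toContinuousLinearMap', Matrix.mulVecLin_apply]
      abel
    have hD : HasStrictFDerivAt Fn
        (Dequiv : (ℂ × ℂ × (Fin m → ℂ)) →L[ℂ] (ℂ × ℂ × (Fin m → ℂ))) a₀ := by
      rw [hDcoe]; exact hbig
    -- local homeomorphism
    set floc := hD.toOpenPartialHomeomorph Fn with hfloc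
    have hsrc : a₀ ∈ floc.source := hD.mem_toOpenPartialHomeomorph_source
    have hcoe : ⇑floc = Fn := hD.toOpenPartialHomeomorph_coe
    -- analyticity of Fn
    have hFnA : AnalyticAt ℂ Fn a₀ := by
      refine AnalyticAt.prod (P1.analyticAt a₀) (AnalyticAt.prod ((dotc.comp P3).analyticAt a₀) ?_)
      have a1 : AnalyticAt ℂ (fun p : ℂ × ℂ × (Fin m → ℂ) => B₁ *ᵥ p.2.2) a₀ :=
        ((mv B₁).comp P3).analyticAt a₀
      have a2 : AnalyticAt ℂ (fun p : ℂ × ℂ × (Fin m → ℂ) => p.1 • (B₂ *ᵥ p.2.2)) a₀ :=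
        (P1.analyticAt a₀).smul (((mv B₂).comp P3).analyticAt a₀)
      have a3 : AnalyticAt ℂ (fun p : ℂ × ℂ × (Fin m → ℂ) => p.2.1 • (B₃ *ᵥ p.2.2)) a₀ :=
        (P2.analyticAt a₀).smul (((mv B₃).comp P3).analyticAt a₀)
      have := (a1.add a2).add a3
      apply this.congr
      filter_upwards with p
      simp [Matrix.add_mulVec, Matrix.smul_mulVec]
    -- analyticity of local inverse
    have hfdA : AnalyticAt ℂ floc a₀ := by rw [hcoe]; exact hFnA
    have hfder : fderiv ℂ floc a₀ =
        (Dequiv : (ℂ × ℂ × (Fin m → ℂ)) →L[ℂ] (ℂ × ℂ × (Fin m → ℂ))) := by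
      rw [hcoe]; exact hD.hasFDerivAt.fderiv
    have hsymmA : AnalyticAt ℂ floc.symm (floc a₀) :=
      floc.analyticAt_symm' hsrc hfdA hfder
    have hFa : Fn a₀ = (lam, 1, 0) := by
      simp only [hFndef, ha₀]
      exact Prod.ext rfl (Prod.ext hc hB)
    have hfla : floc a₀ = (lam, 1, 0) := by rw [hcoe, hFa]
    -- the functions
    set g : ℂ → ℂ := fun s => (floc.symm (s, 1, 0)).2.1 with hgdef
    set Y : ℂ → (Fin m → ℂ) := fun s => (floc.symm (s, 1, 0)).2.2 with hYdef
    have hcurveA : AnalyticAt ℂ (fun s : ℂ => floc.symm (s, 1, 0)) lam := by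
      have h1 : AnalyticAt ℂ (fun s : ℂ => ((s, 1, 0) : ℂ × ℂ × (Fin m → ℂ))) lam :=
        analyticAt_id.prod analyticAt_const
      have : floc a₀ = ((lam, 1, 0) : ℂ × ℂ × (Fin m → ℂ)) := hfla
      exact AnalyticAt.comp (by rw [← this] at *; exact hsymmA) h1
    have hsymm_a : floc.symm (lam, 1, 0) = a₀ := by
      rw [← hfla]; exact floc.left_inv hsrc
    have hga : g lam = μ := by rw [hgdef]; simp [hsymm_a, ha₀]
    have hYa : Y lam = y := by rw [hYdef]; simp [hsymm_a, ha₀]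
    refine ⟨g, Y, ?_, ?_, hga, hYa, ?_, ?_⟩
    · exact ((ContinuousLinearMap.fst ℂ ℂ (Fin m → ℂ)).comp
        (ContinuousLinearMap.snd ℂ ℂ (ℂ × (Fin m → ℂ)))).analyticAt _ |>.comp hcurveA
    · exact ((ContinuousLinearMap.snd ℂ ℂ (Fin m → ℂ)).comp
        (ContinuousLinearMap.snd ℂ ℂ (ℂ × (Fin m → ℂ)))).analyticAt _ |>.comp hcurveA
    · -- eventually
      have htgt : floc.target ∈ nhds (floc a₀) :=
        floc.open_target.mem_nhds (floc.map_source hsrc)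
      have hcont : ContinuousAt (fun s : ℂ => ((s, 1, 0) : ℂ × ℂ × (Fin m → ℂ))) lam := by
        fun_prop
      have hev : ∀ᶠ s in nhds lam, ((s, 1, 0) : ℂ × ℂ × (Fin m → ℂ)) ∈ floc.target := by
        have := hcont.preimage_mem_nhds (by rw [hfla] at htgt; exact htgt)
        exact this
      filter_upwards [hev] with s hs
      have hri : floc (floc.symm (s, 1, 0)) = (s, 1, 0) := floc.right_inv hs
      rw [hcoe] at hri
      have e1 : (floc.symm ((s, 1, 0) : ℂ × ℂ × (Fin m → ℂ))).1 = s :=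
        congrArg Prod.fst hri
      have e2 : c ⬝ᵥ (floc.symm ((s, 1, 0) : ℂ × ℂ × (Fin m → ℂ))).2.2 = 1 :=
        congrArg (fun q : ℂ × ℂ × (Fin m → ℂ) => q.2.1) hri
      have e3 : (B₁ + (floc.symm ((s, 1, 0) : ℂ × ℂ × (Fin m → ℂ))).1 • B₂ +
          (floc.symm ((s, 1, 0) : ℂ × ℂ × (Fin m → ℂ))).2.1 • B₃) *ᵥ
          (floc.symm ((s, 1, 0) : ℂ × ℂ × (Fin m → ℂ))).2.2 = 0 :=
        congrArg (fun q : ℂ × ℂ × (Fin m → ℂ) => q.2.2) hri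
      rw [e1] at e3
      exact ⟨e3, e2⟩
    · rw [hga]; exact hA
  · rintro ⟨g, Y, hg, hY, hgl, hYl, hev, hAx⟩
    have h0 := hev.self_of_nhds
    constructor
    · rw [hgl] at hAx; exact hAx
    · have := h0.1
      rw [hgl, hYl] at this
      exact this
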